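/- arXiv:2506.17760 — 3 statements merged into one kernel-verified Lean document; each statement's English description precedes it below -/
import Mathlib

section
/- Let (Ω, 𝓕, ℙ) be a standard Borel probability space, let X : Ω → ℝ^d be measurable, let A, Z : Ω → {0,1} be measurable, and let Y, Y₁, Y₀ : Ω → ℝ be measurable random variables satisfying consistency: Y = A·Y₁ + (1−A)·Y₀ almost surely. If the triple (Y₁, Y₀, A) is conditionally independent of Z given the σ-algebra σ(X) generated by X, then Y is conditionally independent of Z given the σ-algebra σ(X, A) generated jointly by X and A. (This is Proposition 1 of the paper in the case X_s = X: if exposure A is conditionally exchangeable given X and Z is a negative control exposure, then the observed outcome Y is conditionally independent of Z given X and A.) -/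
open MeasureTheory ProbabilityTheory

section Aux

variable {Ω : Type*} {mΩ : MeasurableSpace Ω} {μ : Measure Ω} [IsProbabilityMeasure μ]

lemma prop1_aux_integrable_of_bound {f : Ω → ℝ} (hf : AEStronglyMeasurable f μ) {c : ℝ}
    (h : ∀ᵐ ω ∂μ, ‖f ω‖ ≤ c) : Integrable f μ := by
  simpa using (integrable_const (1 : ℝ)).bdd_mul hf h

lemma prop1_aux_bdd1_mul {f g : Ω → ℝ} (hf : ∀ᵐ ω ∂μ, ‖f ω‖ ≤ 1) (hg : ∀ᵐ ω ∂μ, ‖g ω‖ ≤ 1) :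
    ∀ᵐ ω ∂μ, ‖f ω * g ω‖ ≤ 1 := by
  filter_upwards [hf, hg] with ω h1 h2
  rw [norm_mul]
  exact mul_le_one₀ h1 (norm_nonneg _) h2

lemma prop1_aux_bdd1_indicator (S : Set Ω) :
    ∀ᵐ ω ∂μ, ‖S.indicator (fun _ => (1 : ℝ)) ω‖ ≤ 1 := by
  refine Filter.Eventually.of_forall fun ω => ?_
  by_cases h : ω ∈ S <;> simp [Set.indicator_apply, h]

lemma prop1_aux_integrable_indicator {S : Set Ω} (hS : MeasurableSet[mΩ] S) :
    Integrable (S.indicator fun _ => (1 : ℝ)) μ :=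
  (integrable_const 1).indicator hS

lemma prop1_aux_aesm_indicator {S : Set Ω} (hS : MeasurableSet[mΩ] S) :
    AEStronglyMeasurable (S.indicator fun _ => (1 : ℝ)) μ :=
  (measurable_const.indicator hS).aestronglyMeasurable

lemma prop1_aux_bdd1_condexp {m : MeasurableSpace Ω} (hm : m ≤ mΩ) {S : Set Ω}
    (hS : MeasurableSet[mΩ] S) : ∀ᵐ ω ∂μ, ‖(μ⟦S | m⟧) ω‖ ≤ 1 := by
  have h0 : 0 ≤ᵐ[μ] μ⟦S | m⟧ :=
    condExp_nonneg (Filter.Eventually.of_forall fun ω => Set.indicator_nonneg (by simp) ω)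
  have hind : Integrable (S.indicator fun _ => (1:ℝ)) μ := by
    clear! m; exact prop1_aux_integrable_indicator hS
  have h1 : μ⟦S | m⟧ ≤ᵐ[μ] μ[(fun _ => (1:ℝ)) | m] := by
    refine condExp_mono hind (integrable_const 1) ?_
    refine Filter.Eventually.of_forall fun ω => ?_
    by_cases h : ω ∈ S <;> simp [Set.indicator_apply, h]
  have hc : μ[(fun _ => (1:ℝ)) | m] = fun _ => (1:ℝ) := condExp_const hm 1
  filter_upwards [h0, h1] with ω hω0 hω1
  rw [hc] at hω1
  simp only [Pi.zero_apply] at hω0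
  rw [Real.norm_eq_abs, abs_le]
  exact ⟨by linarith, hω1⟩

lemma prop1_aux_setIntegral_indicator_mul {S : Set Ω} (hS : MeasurableSet S) (f : Ω → ℝ) :
    ∫ ω in S, f ω ∂μ = ∫ ω, S.indicator (fun _ => (1 : ℝ)) ω * f ω ∂μ := by
  rw [← integral_indicator hS]
  refine integral_congr_ae (Filter.Eventually.of_forall fun ω => ?_)
  by_cases h : ω ∈ S <;> simp [Set.indicator_apply, h]

lemma prop1_aux_int_mul_condexp {m : MeasurableSpace Ω} (hm : m ≤ mΩ) {g f : Ω → ℝ}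
    (hg : StronglyMeasurable[m] g) (hf : Integrable f μ) (hgf : Integrable (g * f) μ) :
    ∫ ω, g ω * f ω ∂μ = ∫ ω, g ω * (μ[f | m]) ω ∂μ := by
  have h1 : μ[g * f | m] =ᵐ[μ] g * μ[f | m] := condExp_mul_of_stronglyMeasurable_left hg hgf hf
  calc ∫ ω, g ω * f ω ∂μ = ∫ ω, (g * f) ω ∂μ := rfl
    _ = ∫ ω, (μ[g * f | m]) ω ∂μ := (integral_condExp hm (f := g * f)).symm
    _ = ∫ ω, (g * μ[f | m]) ω ∂μ := integral_congr_ae h1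
    _ = ∫ ω, g ω * (μ[f | m]) ω ∂μ := rfl

lemma prop1_aux_ext_on_comap {γ₁ γ₂ : Type*} [Mγ₁ : MeasurableSpace γ₁] [Mγ₂ : MeasurableSpace γ₂]
    {φ : Ω → γ₁ × γ₂} (hφ : Measurable φ) {f g : Ω → ℝ}
    (hf : Integrable f μ) (hg : Integrable g μ)
    (h : ∀ B C, MeasurableSet B → MeasurableSet C →
      ∫ ω in φ ⁻¹' (B ×ˢ C), f ω ∂μ = ∫ ω in φ ⁻¹' (B ×ˢ C), g ω ∂μ) :
    ∀ s, MeasurableSet[MeasurableSpace.comap φ inferInstance] s →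
      ∫ ω in s, f ω ∂μ = ∫ ω in s, g ω ∂μ := by
  have htot : ∫ ω, f ω ∂μ = ∫ ω, g ω ∂μ := by
    have := h Set.univ Set.univ MeasurableSet.univ MeasurableSet.univ
    simpa using this
  have key : ∀ u : Set (γ₁ × γ₂), MeasurableSet u →
      ∫ ω in φ ⁻¹' u, f ω ∂μ = ∫ ω in φ ⁻¹' u, g ω ∂μ := by
    refine MeasurableSpace.induction_on_inter generateFrom_prod.symm isPiSystem_prod ?_ ?_ ?_ ?_
    · simp
    · rintro u ⟨B, hB, C, hC, rfl⟩
      exact h B C hB hC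
    · intro u hu ih
      have h1 := integral_add_compl (hφ hu) hf
      have h2 := integral_add_compl (hφ hu) hg
      rw [Set.preimage_compl]
      linarith
    · intro F hdisj hmeas ih
      rw [Set.preimage_iUnion,
        integral_iUnion (fun i => hφ (hmeas i)) (fun i j hij => (hdisj hij).preimage φ)
          hf.integrableOn,
        integral_iUnion (fun i => hφ (hmeas i)) (fun i j hij => (hdisj hij).preimage φ)
          hg.integrableOn]
      exact tsum_congr ih
  rintro s ⟨u, hu, rfl⟩
  exact key u hu

lemma prop1_aux_integrableOn {f : Ω → ℝ} (hf : Integrable f μ) (S : Set Ω) :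
    IntegrableOn f S μ := hf.integrableOn

end Aux

section Aux2

variable {Ω : Type*} {m : MeasurableSpace Ω}

lemma prop1_aux_sm_indicator {S : Set Ω} (hS : MeasurableSet[m] S) :
    StronglyMeasurable[m] (S.indicator fun _ => (1 : ℝ)) :=
  stronglyMeasurable_const.indicator hS

end Aux2

/-- **Proposition 1** (case `X_s = X`): if `(Y₁, Y₀, A)` is conditionally independent of the
negative control exposure `Z` given `σ(X)`, and the observed outcome satisfies consistency
`Y = A·Y₁ + (1−A)·Y₀` a.s., then `Y` is conditionally independent of `Z` given `σ(X, A)`. -/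
theorem prop1 {Ω : Type*} [mΩ : MeasurableSpace Ω] [StandardBorelSpace Ω] [Nonempty Ω]
    (μ : Measure Ω) [IsProbabilityMeasure μ] {d : ℕ}
    (X : Ω → (Fin d → ℝ)) (A Z : Ω → ℝ) (Y Y₁ Y₀ : Ω → ℝ)
    (hX : Measurable X) (hA : Measurable A) (hZ : Measurable Z)
    (hY : Measurable Y) (hY₁ : Measurable Y₁) (hY₀ : Measurable Y₀)
    (hAbin : ∀ ω, A ω = 0 ∨ A ω = 1) (hZbin : ∀ ω, Z ω = 0 ∨ Z ω = 1)
    (hcons : ∀ᵐ ω ∂μ, Y ω = A ω * Y₁ ω + (1 - A ω) * Y₀ ω)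
    (hCI : CondIndepFun (MeasurableSpace.comap X inferInstance) hX.comap_le
      (fun ω => (Y₁ ω, Y₀ ω, A ω)) Z μ) :
    CondIndepFun (MeasurableSpace.comap (fun ω => (X ω, A ω)) inferInstance)
      (Measurable.comap_le (hX.prodMk hA)) Y Z μ := by
  classical
  rw [condIndepFun_iff_condExp_inter_preimage_eq_mul (hY₁.prodMk (hY₀.prodMk hA)) hZ] at hCI
  rw [condIndepFun_iff_condExp_inter_preimage_eq_mul hY hZ]
  intro s t hs ht
  set W : Ω → ℝ × ℝ × ℝ := fun ω => (Y₁ ω, Y₀ ω, A ω) with hW_def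
  have hW : Measurable W := hY₁.prodMk (hY₀.prodMk hA)
  set m : MeasurableSpace Ω := MeasurableSpace.comap X inferInstance with hm_def
  set m' : MeasurableSpace Ω := MeasurableSpace.comap (fun ω => (X ω, A ω)) inferInstance
    with hm'_def
  have hm : m ≤ mΩ := hX.comap_le
  have hm' : m' ≤ mΩ := (hX.prodMk hA).comap_le
  have hmm' : m ≤ m' := by
    rintro S ⟨B, hB, rfl⟩
    exact ⟨Prod.fst ⁻¹' B, measurable_fst hB, rfl⟩
  haveI hSF : SigmaFinite (μ.trim hm) := by infer_instance
  haveI hSF' : SigmaFinite (μ.trim hm') := by infer_instance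
  -- basic measurability facts
  have hZt : MeasurableSet[mΩ] (Z ⁻¹' t) := hZ ht
  have hYs : MeasurableSet[mΩ] (Y ⁻¹' s) := hY hs
  have hbh : ∀ᵐ ω ∂μ, ‖(μ⟦Z ⁻¹' t | m⟧) ω‖ ≤ 1 := prop1_aux_bdd1_condexp hm hZt
  -- pointwise indicator multiplication
  have indmul : ∀ (S T : Set Ω) (ω : Ω), (S ∩ T).indicator (fun _ => (1:ℝ)) ω
      = S.indicator (fun _ => (1:ℝ)) ω * T.indicator (fun _ => (1:ℝ)) ω := by
    intro S T ω
    by_cases h1 : ω ∈ S <;> by_cases h2 : ω ∈ T <;> simp [Set.indicator_apply, h1, h2]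
  -- the two key computations on rectangles
  have key1 : ∀ (B : Set (Fin d → ℝ)) (C : Set (ℝ × ℝ × ℝ)), MeasurableSet B → MeasurableSet C →
      ∫ ω, (X ⁻¹' B).indicator (fun _ => (1:ℝ)) ω *
          ((W ⁻¹' C).indicator (fun _ => (1:ℝ)) ω * (Z ⁻¹' t).indicator (fun _ => (1:ℝ)) ω) ∂μ
        = ∫ ω, ((X ⁻¹' B).indicator (fun _ => (1:ℝ)) ω * (μ⟦Z ⁻¹' t | m⟧) ω) *
            (μ⟦W ⁻¹' C | m⟧) ω ∂μ := by
    intro B C hB hC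
    have hXB : MeasurableSet[mΩ] (X ⁻¹' B) := hX hB
    have hWC : MeasurableSet[mΩ] (W ⁻¹' C) := hW hC
    have hXBm : MeasurableSet[m] (X ⁻¹' B) := ⟨B, hB, rfl⟩
    have hint : Integrable ((W ⁻¹' C ∩ Z ⁻¹' t).indicator (fun _ => (1:ℝ))) μ :=
      prop1_aux_integrable_indicator (hWC.inter hZt)
    have hgf : Integrable (((X ⁻¹' B).indicator (fun _ => (1:ℝ))) *
        ((W ⁻¹' C ∩ Z ⁻¹' t).indicator (fun _ => (1:ℝ)))) μ := by
      refine prop1_aux_integrable_of_bound ?_ (prop1_aux_bdd1_mul (prop1_aux_bdd1_indicator _)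
        (prop1_aux_bdd1_indicator _))
      exact (prop1_aux_aesm_indicator hXB).mul (prop1_aux_aesm_indicator (hWC.inter hZt))
    calc ∫ ω, (X ⁻¹' B).indicator (fun _ => (1:ℝ)) ω *
            ((W ⁻¹' C).indicator (fun _ => (1:ℝ)) ω * (Z ⁻¹' t).indicator (fun _ => (1:ℝ)) ω) ∂μ
        = ∫ ω, (X ⁻¹' B).indicator (fun _ => (1:ℝ)) ω *
            ((W ⁻¹' C ∩ Z ⁻¹' t).indicator (fun _ => (1:ℝ))) ω ∂μ := by
          refine integral_congr_ae (Filter.Eventually.of_forall fun ω => ?_)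
          simp only [indmul]
      _ = ∫ ω, (X ⁻¹' B).indicator (fun _ => (1:ℝ)) ω *
            (μ⟦W ⁻¹' C ∩ Z ⁻¹' t | m⟧) ω ∂μ :=
          prop1_aux_int_mul_condexp hm (prop1_aux_sm_indicator hXBm) hint hgf
      _ = ∫ ω, ((X ⁻¹' B).indicator (fun _ => (1:ℝ)) ω * (μ⟦Z ⁻¹' t | m⟧) ω) *
            (μ⟦W ⁻¹' C | m⟧) ω ∂μ := by
          refine integral_congr_ae ?_
          filter_upwards [hCI C t hC ht] with ω hω
          rw [hω]; ring
  have key2 : ∀ (B : Set (Fin d → ℝ)) (C : Set (ℝ × ℝ × ℝ)), MeasurableSet B → MeasurableSet C →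
      ∫ ω, ((X ⁻¹' B).indicator (fun _ => (1:ℝ)) ω * (μ⟦Z ⁻¹' t | m⟧) ω) *
          (W ⁻¹' C).indicator (fun _ => (1:ℝ)) ω ∂μ
        = ∫ ω, ((X ⁻¹' B).indicator (fun _ => (1:ℝ)) ω * (μ⟦Z ⁻¹' t | m⟧) ω) *
            (μ⟦W ⁻¹' C | m⟧) ω ∂μ := by
    intro B C hB hC
    have hXB : MeasurableSet[mΩ] (X ⁻¹' B) := hX hB
    have hWC : MeasurableSet[mΩ] (W ⁻¹' C) := hW hC
    have hXBm : MeasurableSet[m] (X ⁻¹' B) := ⟨B, hB, rfl⟩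
    have hg : StronglyMeasurable[m]
        (fun ω => (X ⁻¹' B).indicator (fun _ => (1:ℝ)) ω * (μ⟦Z ⁻¹' t | m⟧) ω) :=
      (prop1_aux_sm_indicator hXBm).mul stronglyMeasurable_condExp
    have hf : Integrable ((W ⁻¹' C).indicator (fun _ => (1:ℝ))) μ :=
      prop1_aux_integrable_indicator hWC
    have hgf : Integrable ((fun ω => (X ⁻¹' B).indicator (fun _ => (1:ℝ)) ω *
        (μ⟦Z ⁻¹' t | m⟧) ω) * ((W ⁻¹' C).indicator (fun _ => (1:ℝ)))) μ := by
      refine prop1_aux_integrable_of_bound ?_ (prop1_aux_bdd1_mul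
        (prop1_aux_bdd1_mul (prop1_aux_bdd1_indicator _) hbh) (prop1_aux_bdd1_indicator _))
      exact (((prop1_aux_aesm_indicator hXB).mul
        ((stronglyMeasurable_condExp.mono hm).aestronglyMeasurable)).mul
        (prop1_aux_aesm_indicator hWC))
    exact prop1_aux_int_mul_condexp hm hg hf hgf
  -- Step A : the conditional expectation of the indicator of `Z ⁻¹' t` given `m'` equals that
  -- given `m`.
  have stepA : (μ⟦Z ⁻¹' t | m⟧) =ᵐ[μ] μ⟦Z ⁻¹' t | m'⟧ := by
    refine ae_eq_condExp_of_forall_setIntegral_eq hm' (prop1_aux_integrable_indicator hZt)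
      (fun S hS hμS => prop1_aux_integrableOn integrable_condExp S) ?_
      ((stronglyMeasurable_condExp.mono hmm').aestronglyMeasurable)
    intro S hS hμS
    refine prop1_aux_ext_on_comap (hX.prodMk hA) integrable_condExp
      (prop1_aux_integrable_indicator hZt) ?_ S hS
    intro B D hB hD
    have hC' : MeasurableSet (Set.univ ×ˢ Set.univ ×ˢ D : Set (ℝ × ℝ × ℝ)) :=
      MeasurableSet.univ.prod (MeasurableSet.univ.prod hD)
    have hpre : (fun ω => (X ω, A ω)) ⁻¹' (B ×ˢ D)
        = X ⁻¹' B ∩ (W ⁻¹' (Set.univ ×ˢ Set.univ ×ˢ D)) := by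
      ext ω; simp [W, Set.mem_prod]
    have hXB : MeasurableSet[mΩ] (X ⁻¹' B) := hX hB
    have hWC : MeasurableSet[mΩ] (W ⁻¹' (Set.univ ×ˢ Set.univ ×ˢ D)) := hW hC'
    rw [hpre, prop1_aux_setIntegral_indicator_mul (hXB.inter hWC),
      prop1_aux_setIntegral_indicator_mul (hXB.inter hWC)]
    calc ∫ ω, (X ⁻¹' B ∩ W ⁻¹' (Set.univ ×ˢ Set.univ ×ˢ D)).indicator (fun _ => (1:ℝ)) ω *
            (μ⟦Z ⁻¹' t | m⟧) ω ∂μ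
        = ∫ ω, ((X ⁻¹' B).indicator (fun _ => (1:ℝ)) ω * (μ⟦Z ⁻¹' t | m⟧) ω) *
            (W ⁻¹' (Set.univ ×ˢ Set.univ ×ˢ D)).indicator (fun _ => (1:ℝ)) ω ∂μ := by
          refine integral_congr_ae (Filter.Eventually.of_forall fun ω => ?_)
          simp only [indmul]; ring
      _ = ∫ ω, ((X ⁻¹' B).indicator (fun _ => (1:ℝ)) ω * (μ⟦Z ⁻¹' t | m⟧) ω) *
            (μ⟦W ⁻¹' (Set.univ ×ˢ Set.univ ×ˢ D) | m⟧) ω ∂μ := key2 B _ hB hC'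
      _ = ∫ ω, (X ⁻¹' B).indicator (fun _ => (1:ℝ)) ω *
            ((W ⁻¹' (Set.univ ×ˢ Set.univ ×ˢ D)).indicator (fun _ => (1:ℝ)) ω *
              (Z ⁻¹' t).indicator (fun _ => (1:ℝ)) ω) ∂μ := (key1 B _ hB hC').symm
      _ = ∫ ω, (X ⁻¹' B ∩ W ⁻¹' (Set.univ ×ˢ Set.univ ×ˢ D)).indicator (fun _ => (1:ℝ)) ω *
            ((Z ⁻¹' t).indicator (fun _ => (1:ℝ))) ω ∂μ := by
          refine integral_congr_ae (Filter.Eventually.of_forall fun ω => ?_)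
          simp only [indmul]; ring
  -- Step B : identify the conditional expectation of the indicator of `Y ⁻¹' s ∩ Z ⁻¹' t`.
  have stepB : (fun ω => (μ⟦Y ⁻¹' s | m'⟧) ω * (μ⟦Z ⁻¹' t | m⟧) ω)
      =ᵐ[μ] μ⟦Y ⁻¹' s ∩ Z ⁻¹' t | m'⟧ := by
    have hg0int : Integrable (fun ω => (μ⟦Y ⁻¹' s | m'⟧) ω * (μ⟦Z ⁻¹' t | m⟧) ω) μ := by
      refine prop1_aux_integrable_of_bound ?_
        (prop1_aux_bdd1_mul (prop1_aux_bdd1_condexp hm' hYs) hbh)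
      exact (stronglyMeasurable_condExp.mono hm').aestronglyMeasurable.mul
        ((stronglyMeasurable_condExp.mono hm).aestronglyMeasurable)
    refine ae_eq_condExp_of_forall_setIntegral_eq hm'
      (prop1_aux_integrable_indicator (hYs.inter hZt))
      (fun S hS hμS => prop1_aux_integrableOn hg0int S) ?_
      ((stronglyMeasurable_condExp.mul (stronglyMeasurable_condExp.mono hmm')).aestronglyMeasurable)
    intro S hS hμS
    refine prop1_aux_ext_on_comap (hX.prodMk hA) hg0int
      (prop1_aux_integrable_indicator (hYs.inter hZt)) ?_ S hS
    intro B D hB hD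
    set C : Set (ℝ × ℝ × ℝ) :=
      {p : ℝ × ℝ × ℝ | p.2.2 ∈ D ∧ p.2.2 * p.1 + (1 - p.2.2) * p.2.1 ∈ s} with hC_def
    have hsnd : Measurable fun p : ℝ × ℝ × ℝ => p.2.2 := measurable_snd.comp measurable_snd
    have hC : MeasurableSet C := by
      refine (hsnd hD).inter ?_
      exact ((hsnd.mul measurable_fst).add
        ((measurable_const.sub hsnd).mul (measurable_fst.comp measurable_snd))) hs
    have haeid : ∀ᵐ ω ∂μ, (A ⁻¹' D ∩ Y ⁻¹' s).indicator (fun _ => (1:ℝ)) ω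
        = (W ⁻¹' C).indicator (fun _ => (1:ℝ)) ω := by
      filter_upwards [hcons] with ω hω
      have hmem : ω ∈ A ⁻¹' D ∩ Y ⁻¹' s ↔ ω ∈ W ⁻¹' C := by
        simp only [Set.mem_inter_iff, Set.mem_preimage, W, C, Set.mem_setOf_eq, hω]
      simp only [Set.indicator_apply]
      exact if_congr hmem rfl rfl
    have hpre : (fun ω => (X ω, A ω)) ⁻¹' (B ×ˢ D) = X ⁻¹' B ∩ A ⁻¹' D := by
      ext ω; simp [Set.mem_prod]
    have hXB : MeasurableSet[mΩ] (X ⁻¹' B) := hX hB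
    have hAD : MeasurableSet[mΩ] (A ⁻¹' D) := hA hD
    have hXBm : MeasurableSet[m] (X ⁻¹' B) := ⟨B, hB, rfl⟩
    have hXBm' : MeasurableSet[m'] (X ⁻¹' B) := hmm' _ hXBm
    have hADm' : MeasurableSet[m'] (A ⁻¹' D) := ⟨Prod.snd ⁻¹' D, measurable_snd hD, rfl⟩
    have hWC : MeasurableSet[mΩ] (W ⁻¹' C) := hW hC
    rw [hpre, prop1_aux_setIntegral_indicator_mul (hXB.inter hAD),
      prop1_aux_setIntegral_indicator_mul (hXB.inter hAD)]
    -- the candidate side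
    have hg : StronglyMeasurable[m'] (fun ω => (X ⁻¹' B).indicator (fun _ => (1:ℝ)) ω *
        (A ⁻¹' D).indicator (fun _ => (1:ℝ)) ω * (μ⟦Z ⁻¹' t | m⟧) ω) :=
      ((prop1_aux_sm_indicator hXBm').mul (prop1_aux_sm_indicator hADm')).mul
        (stronglyMeasurable_condExp.mono hmm')
    have hfY : Integrable ((Y ⁻¹' s).indicator (fun _ => (1:ℝ))) μ :=
      prop1_aux_integrable_indicator hYs
    have hgfY : Integrable ((fun ω => (X ⁻¹' B).indicator (fun _ => (1:ℝ)) ω *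
        (A ⁻¹' D).indicator (fun _ => (1:ℝ)) ω * (μ⟦Z ⁻¹' t | m⟧) ω) *
          ((Y ⁻¹' s).indicator (fun _ => (1:ℝ)))) μ := by
      refine prop1_aux_integrable_of_bound ?_ (prop1_aux_bdd1_mul (prop1_aux_bdd1_mul
        (prop1_aux_bdd1_mul (prop1_aux_bdd1_indicator _) (prop1_aux_bdd1_indicator _)) hbh)
        (prop1_aux_bdd1_indicator _))
      exact ((((prop1_aux_aesm_indicator hXB).mul (prop1_aux_aesm_indicator hAD)).mul
        ((stronglyMeasurable_condExp.mono hm).aestronglyMeasurable)).mul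
        (prop1_aux_aesm_indicator hYs))
    calc ∫ ω, (X ⁻¹' B ∩ A ⁻¹' D).indicator (fun _ => (1:ℝ)) ω *
            ((μ⟦Y ⁻¹' s | m'⟧) ω * (μ⟦Z ⁻¹' t | m⟧) ω) ∂μ
        = ∫ ω, ((fun ω => (X ⁻¹' B).indicator (fun _ => (1:ℝ)) ω *
            (A ⁻¹' D).indicator (fun _ => (1:ℝ)) ω * (μ⟦Z ⁻¹' t | m⟧) ω) ω) *
            (μ⟦Y ⁻¹' s | m'⟧) ω ∂μ := by
          refine integral_congr_ae (Filter.Eventually.of_forall fun ω => ?_)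
          simp only [indmul]; ring
      _ = ∫ ω, ((fun ω => (X ⁻¹' B).indicator (fun _ => (1:ℝ)) ω *
            (A ⁻¹' D).indicator (fun _ => (1:ℝ)) ω * (μ⟦Z ⁻¹' t | m⟧) ω) ω) *
            ((Y ⁻¹' s).indicator (fun _ => (1:ℝ))) ω ∂μ :=
          (prop1_aux_int_mul_condexp hm' hg hfY hgfY).symm
      _ = ∫ ω, ((X ⁻¹' B).indicator (fun _ => (1:ℝ)) ω * (μ⟦Z ⁻¹' t | m⟧) ω) *
            ((A ⁻¹' D ∩ Y ⁻¹' s).indicator (fun _ => (1:ℝ)) ω) ∂μ := by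
          refine integral_congr_ae (Filter.Eventually.of_forall fun ω => ?_)
          simp only [indmul]; ring
      _ = ∫ ω, ((X ⁻¹' B).indicator (fun _ => (1:ℝ)) ω * (μ⟦Z ⁻¹' t | m⟧) ω) *
            ((W ⁻¹' C).indicator (fun _ => (1:ℝ)) ω) ∂μ := by
          refine integral_congr_ae ?_
          filter_upwards [haeid] with ω hω
          rw [hω]
      _ = ∫ ω, ((X ⁻¹' B).indicator (fun _ => (1:ℝ)) ω * (μ⟦Z ⁻¹' t | m⟧) ω) *
            (μ⟦W ⁻¹' C | m⟧) ω ∂μ := key2 B C hB hC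
      _ = ∫ ω, (X ⁻¹' B).indicator (fun _ => (1:ℝ)) ω *
            ((W ⁻¹' C).indicator (fun _ => (1:ℝ)) ω *
              (Z ⁻¹' t).indicator (fun _ => (1:ℝ)) ω) ∂μ := (key1 B C hB hC).symm
      _ = ∫ ω, ((X ⁻¹' B).indicator (fun _ => (1:ℝ)) ω *
            ((A ⁻¹' D ∩ Y ⁻¹' s).indicator (fun _ => (1:ℝ)) ω *
              (Z ⁻¹' t).indicator (fun _ => (1:ℝ)) ω)) ∂μ := by
          refine integral_congr_ae ?_
          filter_upwards [haeid] with ω hω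
          rw [hω]
      _ = ∫ ω, (X ⁻¹' B ∩ A ⁻¹' D).indicator (fun _ => (1:ℝ)) ω *
            ((Y ⁻¹' s ∩ Z ⁻¹' t).indicator (fun _ => (1:ℝ))) ω ∂μ := by
          refine integral_congr_ae (Filter.Eventually.of_forall fun ω => ?_)
          simp only [indmul]; ring
  -- conclusion
  filter_upwards [stepB, stepA] with ω h1 h2
  rw [← h1, h2]
end

section
/- Let (Ω, 𝓕, ℙ) be a standard Borel probability space, let X_s : Ω → ℝ^d be measurable, let A, Z : Ω → {0,1} be measurable with ℙ(A = 0) > 0, and let Y, Y₀ : Ω → ℝ be measurable with Y = Y₀ almost surely on the event {A = 0} (consistency). Assume: (i) Y₀ is conditionally independent of A given σ(X_s) (partial exchangeability); (ii) Y₀ is conditionally independent of Z given the σ-algebra σ(X_s, A); and (iii) A is conditionally independent of Z given σ(X_s). Then, under the conditional probability measure ℙ[· | A = 0] := ℙ(· ∩ {A = 0}) / ℙ(A = 0), the observed outcome Y is conditionally independent of Z given σ(X_s). (This is Proposition 2 of the paper: if an adjustment set X_s is sufficient for partial exchangeability in the full study population, then adjustment for X_s renders the observed outcome independent of a negative control exposure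 Z within the unexposed population.) -/
open MeasureTheory ProbabilityTheory
open scoped NNReal

section Aux
variable {Ω : Type*} [mΩ : MeasurableSpace Ω] {μ : Measure Ω} [IsProbabilityMeasure μ]

lemma aux_ind_bound (E : Set Ω) (ω : Ω) : ‖Set.indicator E (fun _ => (1:ℝ)) ω‖ ≤ 1 := by
  by_cases h : ω ∈ E <;> simp [Set.indicator_apply, h]

lemma aux_intb {f : Ω → ℝ} (hmeas : AEStronglyMeasurable f μ)
    (hb : ∀ᵐ ω ∂μ, ‖f ω‖ ≤ 1) : Integrable f μ :=
  Integrable.mono' (integrable_const 1) hmeas hb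

lemma aux_cbound {m : MeasurableSpace Ω} {f : Ω → ℝ}
    (hb : ∀ᵐ ω ∂μ, ‖f ω‖ ≤ 1) : ∀ᵐ ω ∂μ, ‖(μ[f|m]) ω‖ ≤ 1 := by
  have : ∀ᵐ ω ∂μ, |f ω| ≤ ((1:ℝ≥0):ℝ) := by simpa [Real.norm_eq_abs] using hb
  have := ae_bdd_condExp_of_ae_bdd (m := m) this
  simpa [Real.norm_eq_abs] using this

lemma aux_pullout {m : MeasurableSpace Ω} (hm : m ≤ mΩ) {f g : Ω → ℝ}
    (hf : StronglyMeasurable[m] f) (hfb : ∀ᵐ ω ∂μ, ‖f ω‖ ≤ 1)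
    (hg : AEStronglyMeasurable[mΩ] g μ) (hgb : ∀ᵐ ω ∂μ, ‖g ω‖ ≤ 1) :
    (μ[f * g|m]) =ᵐ[μ] f * μ[g|m] := by
  refine condExp_mul_of_stronglyMeasurable_left hf ?_ (aux_intb (mΩ := mΩ) hg hgb)
  refine aux_intb (mΩ := mΩ) ((hf.mono hm).aestronglyMeasurable.mul hg) ?_
  filter_upwards [hfb, hgb] with ω h1 h2
  calc ‖f ω * g ω‖ = ‖f ω‖ * ‖g ω‖ := norm_mul _ _
    _ ≤ 1 * 1 := mul_le_mul h1 h2 (norm_nonneg _) zero_le_one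
    _ = 1 := one_mul 1


lemma aux_mulb {ν : Measure Ω} {f g : Ω → ℝ} (hf : ∀ᵐ ω ∂ν, ‖f ω‖ ≤ 1)
    (hg : ∀ᵐ ω ∂ν, ‖g ω‖ ≤ 1) : ∀ᵐ ω ∂ν, ‖f ω * g ω‖ ≤ 1 := by
  filter_upwards [hf, hg] with ω h1 h2
  calc ‖f ω * g ω‖ = ‖f ω‖ * ‖g ω‖ := norm_mul _ _
    _ ≤ 1 * 1 := mul_le_mul h1 h2 (norm_nonneg _) zero_le_one
    _ = 1 := one_mul 1

end Aux
/-- **Proposition 2**: if partial exchangeability `Y₀ ⊥⊥ A | σ(X_s)` holds, `Y₀ ⊥⊥ Z | σ(X_s, A)`,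
`A ⊥⊥ Z | σ(X_s)`, and consistency `Y = Y₀` a.s. on `{A = 0}` holds, then under the conditional
measure `ℙ[·|A=0]` the observed outcome `Y` is conditionally independent of `Z` given `σ(X_s)`. -/
theorem prop2 {Ω : Type*} [mΩ : MeasurableSpace Ω] [StandardBorelSpace Ω] [Nonempty Ω]
    (μ : Measure Ω) [IsProbabilityMeasure μ] {d : ℕ}
    (Xs : Ω → (Fin d → ℝ)) (A Z : Ω → ℝ) (Y Y₀ : Ω → ℝ)
    (hXs : Measurable Xs) (hA : Measurable A) (hZ : Measurable Z)
    (hY : Measurable Y) (hY₀ : Measurable Y₀)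
    (hAbin : ∀ ω, A ω = 0 ∨ A ω = 1) (hZbin : ∀ ω, Z ω = 0 ∨ Z ω = 1)
    (hA0 : 0 < μ {ω | A ω = 0})
    (hcons : ∀ᵐ ω ∂μ, A ω = 0 → Y ω = Y₀ ω)
    (hPE : CondIndepFun (MeasurableSpace.comap Xs inferInstance) hXs.comap_le Y₀ A μ)
    (hNC₂ : CondIndepFun (MeasurableSpace.comap (fun ω => (Xs ω, A ω)) inferInstance)
      (Measurable.comap_le (hXs.prodMk hA)) Y₀ Z μ)
    (hNC₃ : CondIndepFun (MeasurableSpace.comap Xs inferInstance) hXs.comap_le A Z μ) :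
    CondIndepFun (MeasurableSpace.comap Xs inferInstance) hXs.comap_le Y Z
      (μ[|{ω | A ω = 0}]) := by
  classical
  have hG : MeasurableSpace.comap Xs inferInstance ≤ mΩ := hXs.comap_le
  have hM : MeasurableSpace.comap (fun ω => (Xs ω, A ω)) inferInstance ≤ mΩ :=
    Measurable.comap_le (hXs.prodMk hA)
  set G := MeasurableSpace.comap Xs inferInstance with hGdef
  set M := MeasurableSpace.comap (fun ω => (Xs ω, A ω)) inferInstance with hMdef
  have hGM : G ≤ M := by
    rintro _ ⟨u, hu, rfl⟩
    exact ⟨u ×ˢ Set.univ, hu.prod MeasurableSet.univ, by ext ω; simp⟩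
  letI : MeasurableSpace Ω := mΩ
  set B : Set Ω := {ω | A ω = 0} with hBdef
  have hBpre : B = A ⁻¹' {0} := by ext ω; simp [hBdef]
  have hBmeas : MeasurableSet[mΩ] B := by rw [hBpre]; exact hA (measurableSet_singleton 0)
  set ν := μ[|B] with hνdef
  have hp0 : μ B ≠ 0 := hA0.ne'
  haveI hνP : IsProbabilityMeasure ν := cond_isProbabilityMeasure hp0
  have hν_ac : ν ≪ μ := cond_absolutelyContinuous
  have aetrans : ∀ {p : Ω → Prop}, (∀ᵐ ω ∂μ, p ω) → (∀ᵐ ω ∂ν, p ω) :=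
    fun h => h.filter_mono hν_ac.ae_le
  have indSM : ∀ {E : Set Ω}, MeasurableSet[mΩ] E →
      StronglyMeasurable[mΩ] (Set.indicator E fun _ => (1:ℝ)) :=
    fun hE => stronglyMeasurable_const.indicator hE
  have hsetν : ∀ (f : Ω → ℝ) (u : Set Ω), MeasurableSet[mΩ] u →
      ∫ x in u, f x ∂ν = (μ B)⁻¹.toReal * ∫ x in u ∩ B, f x ∂μ := by
    intro f u hu
    rw [hνdef, ProbabilityTheory.cond, Measure.restrict_smul, integral_smul_measure,
      Measure.restrict_restrict hu, smul_eq_mul]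
  -- rewrite the conditional independence hypotheses
  rw [condIndepFun_iff G hG Y₀ A hY₀ hA μ] at hPE
  rw [condIndepFun_iff M hM Y₀ Z hY₀ hZ μ] at hNC₂
  rw [condIndepFun_iff G hG A Z hA hZ μ] at hNC₃
  rw [condIndepFun_iff_condExp_inter_preimage_eq_mul hY hZ]
  intro s t hs ht
  set S : Set Ω := Y ⁻¹' s with hSdef
  set S' : Set Ω := Y₀ ⁻¹' s with hS'def
  set T : Set Ω := Z ⁻¹' t with hTdef
  have hSmeas : MeasurableSet[mΩ] S := hY hs
  have hS'meas : MeasurableSet[mΩ] S' := hY₀ hs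
  have hTmeas : MeasurableSet[mΩ] T := hZ ht
  -- basic boundedness facts
  have hbS : ∀ᵐ ω ∂μ, ‖Set.indicator S (fun _ => (1:ℝ)) ω‖ ≤ 1 :=
    Filter.Eventually.of_forall (aux_ind_bound _)
  have hbS' : ∀ᵐ ω ∂μ, ‖Set.indicator S' (fun _ => (1:ℝ)) ω‖ ≤ 1 :=
    Filter.Eventually.of_forall (aux_ind_bound _)
  have hbT : ∀ᵐ ω ∂μ, ‖Set.indicator T (fun _ => (1:ℝ)) ω‖ ≤ 1 :=
    Filter.Eventually.of_forall (aux_ind_bound _)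
  -- conditional independence consequences
  have hPE' : ∀ v : Set ℝ, MeasurableSet v →
      (μ⟦S' ∩ A ⁻¹' v|G⟧) =ᵐ[μ] μ⟦S'|G⟧ * μ⟦A ⁻¹' v|G⟧ :=
    fun v hv => hPE _ _ ⟨s, hs, rfl⟩ ⟨v, hv, rfl⟩
  have hindB : (μ⟦S' ∩ B|G⟧) =ᵐ[μ] μ⟦S'|G⟧ * μ⟦B|G⟧ := by
    rw [hBpre]; exact hPE' {0} (measurableSet_singleton 0)
  have hindBc : (μ⟦S' ∩ Bᶜ|G⟧) =ᵐ[μ] μ⟦S'|G⟧ * μ⟦Bᶜ|G⟧ := by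
    rw [hBpre, ← Set.preimage_compl]
    exact hPE' {0}ᶜ (measurableSet_singleton 0).compl
  have hNC₃' : (μ⟦T ∩ B|G⟧) =ᵐ[μ] μ⟦T|G⟧ * μ⟦B|G⟧ := by
    have h := hNC₃ (A ⁻¹' {0}) T ⟨{0}, measurableSet_singleton 0, rfl⟩ ⟨t, ht, rfl⟩
    rw [hBpre, Set.inter_comm]
    exact h.trans (Filter.EventuallyEq.of_eq (mul_comm _ _))
  have hNC₂' : (μ⟦S' ∩ T|M⟧) =ᵐ[μ] μ⟦S'|M⟧ * μ⟦T|M⟧ :=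
    hNC₂ S' T ⟨s, hs, rfl⟩ ⟨t, ht, rfl⟩
  -- the generic computation lemma
  have Hgen : ∀ (P w : Set Ω), MeasurableSet[mΩ] P → MeasurableSet[mΩ] w →
      ((μ⟦P ∩ w|G⟧) =ᵐ[μ] μ⟦P|G⟧ * μ⟦w|G⟧) →
      ∀ u : Set Ω, MeasurableSet[G] u →
        ∫ x in u ∩ w, (μ⟦P|G⟧) x ∂μ
          = ∫ x in u ∩ w, Set.indicator P (fun _ => (1:ℝ)) x ∂μ := by
    intro P w hP hw hind u huG
    have hu : MeasurableSet[mΩ] u := hG u huG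
    have hbP : ∀ᵐ ω ∂μ, ‖Set.indicator P (fun _ => (1:ℝ)) ω‖ ≤ 1 :=
      Filter.Eventually.of_forall (aux_ind_bound _)
    have hbw : ∀ᵐ ω ∂μ, ‖Set.indicator w (fun _ => (1:ℝ)) ω‖ ≤ 1 :=
      Filter.Eventually.of_forall (aux_ind_bound _)
    have hcb : ∀ᵐ ω ∂μ, ‖(μ⟦P|G⟧) ω‖ ≤ 1 := aux_cbound (mΩ := mΩ) (m := G) hbP
    have hmulint : Integrable ((μ⟦P|G⟧) * Set.indicator w fun _ => (1:ℝ)) μ :=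
      aux_intb (mΩ := mΩ)
        ((stronglyMeasurable_condExp.mono hG).aestronglyMeasurable.mul
          (indSM hw).aestronglyMeasurable) (aux_mulb hcb hbw)
    have hPwint : Integrable (Set.indicator (P ∩ w) fun _ => (1:ℝ)) μ :=
      aux_intb (mΩ := mΩ) (indSM (hP.inter hw)).aestronglyMeasurable
        (Filter.Eventually.of_forall (aux_ind_bound _))
    have pull := aux_pullout (mΩ := mΩ) hG stronglyMeasurable_condExp hcb
      (indSM hw).aestronglyMeasurable hbw
    calc ∫ x in u ∩ w, (μ⟦P|G⟧) x ∂μ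
        = ∫ x in u, w.indicator (μ⟦P|G⟧) x ∂μ := (setIntegral_indicator (μ := μ) hw).symm
      _ = ∫ x in u, ((μ⟦P|G⟧) * Set.indicator w fun _ => (1:ℝ)) x ∂μ := by
          refine setIntegral_congr_fun (μ := μ) hu fun ω _ => ?_
          by_cases h : ω ∈ w <;> simp [Set.indicator_apply, h]
      _ = ∫ x in u, (μ[(μ⟦P|G⟧) * Set.indicator w fun _ => (1:ℝ)|G]) x ∂μ :=
          (setIntegral_condExp hG hmulint huG).symm
      _ = ∫ x in u, ((μ⟦P|G⟧) * μ⟦w|G⟧) x ∂μ :=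
          setIntegral_congr_ae (μ := μ) hu (pull.mono fun ω h _ => h)
      _ = ∫ x in u, (μ⟦P ∩ w|G⟧) x ∂μ :=
          (setIntegral_congr_ae (μ := μ) hu (hind.mono fun ω h _ => h)).symm
      _ = ∫ x in u, Set.indicator (P ∩ w) (fun _ => (1:ℝ)) x ∂μ :=
          setIntegral_condExp hG hPwint huG
      _ = ∫ x in u, w.indicator (Set.indicator P fun _ => (1:ℝ)) x ∂μ := by
          refine setIntegral_congr_fun (μ := μ) hu fun ω _ => ?_
          by_cases h1 : ω ∈ P <;> by_cases h2 : ω ∈ w <;>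
            simp [Set.indicator_apply, h1, h2]
      _ = ∫ x in u ∩ w, Set.indicator P (fun _ => (1:ℝ)) x ∂μ := setIntegral_indicator (μ := μ) hw
  -- structure of M-measurable sets
  have hMstruct : ∀ m : Set Ω, MeasurableSet[M] m → ∃ u₀ u₁ : Set Ω,
      MeasurableSet[G] u₀ ∧ MeasurableSet[G] u₁ ∧ m = (u₀ ∩ B) ∪ (u₁ ∩ Bᶜ) := by
    rintro _ ⟨v, hv, rfl⟩
    have hv0 : MeasurableSet {x : Fin d → ℝ | (x, (0:ℝ)) ∈ v} :=
      (measurable_id.prodMk measurable_const) hv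
    have hv1 : MeasurableSet {x : Fin d → ℝ | (x, (1:ℝ)) ∈ v} :=
      (measurable_id.prodMk measurable_const) hv
    refine ⟨Xs ⁻¹' {x | (x, (0:ℝ)) ∈ v}, Xs ⁻¹' {x | (x, (1:ℝ)) ∈ v},
      ⟨_, hv0, rfl⟩, ⟨_, hv1, rfl⟩, ?_⟩
    ext ω
    rcases hAbin ω with h | h <;>
      simp [Set.mem_preimage, hBdef, h]
  -- boundedness of conditional expectations
  have hψb : ∀ᵐ ω ∂μ, ‖(μ⟦S'|G⟧) ω‖ ≤ 1 := aux_cbound (m := G) hbS'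
  have hγb : ∀ᵐ ω ∂μ, ‖(μ⟦T|G⟧) ω‖ ≤ 1 := aux_cbound (m := G) hbT
  have hψγb : ∀ᵐ ω ∂μ, ‖((μ⟦S'|G⟧) * (μ⟦T|G⟧)) ω‖ ≤ 1 := aux_mulb hψb hγb
  have hS'int : Integrable (Set.indicator S' fun _ => (1:ℝ)) μ :=
    aux_intb (indSM hS'meas).aestronglyMeasurable hbS'
  -- tower property via partial exchangeability
  have F4 : (μ⟦S'|G⟧) =ᵐ[μ] μ[Set.indicator S' fun ω => (1:ℝ)|M] := by
    refine ae_eq_condExp_of_forall_setIntegral_eq hM hS'int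
      (fun m _ _ => integrable_condExp.integrableOn) ?_
      ((stronglyMeasurable_condExp.mono hGM).aestronglyMeasurable)
    intro m hmM _
    obtain ⟨u₀, u₁, hu₀, hu₁, rfl⟩ := hMstruct m hmM
    have hd : Disjoint (u₀ ∩ B) (u₁ ∩ Bᶜ) :=
      Disjoint.mono Set.inter_subset_right Set.inter_subset_right disjoint_compl_right
    have hm1 : MeasurableSet[mΩ] (u₁ ∩ Bᶜ) := (hG _ hu₁).inter hBmeas.compl
    rw [setIntegral_union hd hm1 integrable_condExp.integrableOn
        integrable_condExp.integrableOn,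
      setIntegral_union hd hm1 hS'int.integrableOn hS'int.integrableOn,
      Hgen S' B hS'meas hBmeas hindB u₀ hu₀,
      Hgen S' Bᶜ hS'meas hBmeas.compl hindBc u₁ hu₁]
  -- consistency transfers
  have hconsS : ∀ᵐ ω ∂μ, ω ∈ B →
      Set.indicator S (fun _ => (1:ℝ)) ω = Set.indicator S' (fun _ => (1:ℝ)) ω := by
    filter_upwards [hcons] with ω h hB
    have hYω : Y ω = Y₀ ω := h hB
    simp only [Set.indicator_apply, hSdef, hS'def, Set.mem_preimage, hYω]
  have hconsST : ∀ᵐ ω ∂μ, ω ∈ B →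
      Set.indicator (S ∩ T) (fun _ => (1:ℝ)) ω
        = Set.indicator (S' ∩ T) (fun _ => (1:ℝ)) ω := by
    filter_upwards [hcons] with ω h hB
    have hYω : Y ω = Y₀ ω := h hB
    simp only [Set.indicator_apply, hSdef, hS'def, Set.mem_inter_iff, Set.mem_preimage, hYω]
  -- identification of conditional expectations under ν
  have C1 : (μ⟦S'|G⟧) =ᵐ[ν] ν⟦S|G⟧ := by
    refine ae_eq_condExp_of_forall_setIntegral_eq hG
      (aux_intb (μ := ν) (indSM hSmeas).aestronglyMeasurable
        (Filter.Eventually.of_forall (aux_ind_bound _)))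
      (fun u _ _ => (aux_intb (μ := ν)
        (stronglyMeasurable_condExp.mono hG).aestronglyMeasurable
        (aetrans hψb)).integrableOn)
      ?_ stronglyMeasurable_condExp.aestronglyMeasurable
    intro u huG _
    have hu : MeasurableSet[mΩ] u := hG u huG
    rw [hsetν _ u hu, hsetν _ u hu]
    congr 1
    rw [Hgen S' B hS'meas hBmeas hindB u huG]
    exact (setIntegral_congr_ae (μ := μ) (hu.inter hBmeas)
      (hconsS.mono fun ω h hm => h hm.2)).symm
  have C2 : (μ⟦T|G⟧) =ᵐ[ν] ν⟦T|G⟧ := by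
    refine ae_eq_condExp_of_forall_setIntegral_eq hG
      (aux_intb (μ := ν) (indSM hTmeas).aestronglyMeasurable
        (Filter.Eventually.of_forall (aux_ind_bound _)))
      (fun u _ _ => (aux_intb (μ := ν)
        (stronglyMeasurable_condExp.mono hG).aestronglyMeasurable
        (aetrans hγb)).integrableOn)
      ?_ stronglyMeasurable_condExp.aestronglyMeasurable
    intro u huG _
    have hu : MeasurableSet[mΩ] u := hG u huG
    rw [hsetν _ u hu, hsetν _ u hu]
    congr 1
    exact Hgen T B hTmeas hBmeas hNC₃' u huG
  have hSM_ψ_M : StronglyMeasurable[M] (μ⟦S'|G⟧) := stronglyMeasurable_condExp.mono hGM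
  have C3 : ((μ⟦S'|G⟧) * (μ⟦T|G⟧)) =ᵐ[ν] ν⟦S ∩ T|G⟧ := by
    refine ae_eq_condExp_of_forall_setIntegral_eq hG
      (aux_intb (μ := ν) (indSM (hSmeas.inter hTmeas)).aestronglyMeasurable
        (Filter.Eventually.of_forall (aux_ind_bound _)))
      (fun u _ _ => (aux_intb (μ := ν)
        ((stronglyMeasurable_condExp.mul stronglyMeasurable_condExp).mono hG).aestronglyMeasurable
        (aetrans hψγb)).integrableOn)
      ?_ (stronglyMeasurable_condExp.mul stronglyMeasurable_condExp).aestronglyMeasurable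
    intro u huG _
    have hu : MeasurableSet[mΩ] u := hG u huG
    rw [hsetν _ u hu, hsetν _ u hu]
    congr 1
    have huB : MeasurableSet[mΩ] (u ∩ B) := hu.inter hBmeas
    have huB_M : MeasurableSet[M] (u ∩ B) := by
      obtain ⟨u', hu', rfl⟩ := huG
      refine ⟨u' ×ˢ {(0:ℝ)}, hu'.prod (measurableSet_singleton 0), ?_⟩
      ext ω
      simp only [Set.mem_preimage, Set.mem_prod, Set.mem_singleton_iff, Set.mem_inter_iff,
        hBdef, Set.mem_setOf_eq]
    have e1 : ∫ x in u ∩ B, Set.indicator (S ∩ T) (fun _ => (1:ℝ)) x ∂μ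
        = ∫ x in u ∩ B, Set.indicator (S' ∩ T) (fun _ => (1:ℝ)) x ∂μ :=
      setIntegral_congr_ae (μ := μ) huB (hconsST.mono fun ω h hm => h hm.2)
    rw [e1]
    have hS'Tint : Integrable (Set.indicator (S' ∩ T) fun _ => (1:ℝ)) μ :=
      aux_intb (indSM (hS'meas.inter hTmeas)).aestronglyMeasurable
        (Filter.Eventually.of_forall (aux_ind_bound _))
    have hψ1T_int : Integrable ((μ⟦S'|G⟧) * Set.indicator T fun _ => (1:ℝ)) μ :=
      aux_intb ((stronglyMeasurable_condExp.mono hG).aestronglyMeasurable.mul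
        (indSM hTmeas).aestronglyMeasurable) (aux_mulb hψb hbT)
    have pullM := aux_pullout (mΩ := mΩ) hM hSM_ψ_M hψb
      (indSM hTmeas).aestronglyMeasurable hbT
    have hψ1TB_int : Integrable ((μ⟦S'|G⟧) * Set.indicator (T ∩ B) fun _ => (1:ℝ)) μ :=
      aux_intb ((stronglyMeasurable_condExp.mono hG).aestronglyMeasurable.mul
        (indSM (hTmeas.inter hBmeas)).aestronglyMeasurable)
        (aux_mulb hψb (Filter.Eventually.of_forall (aux_ind_bound _)))
    have pullG := aux_pullout (mΩ := mΩ) hG stronglyMeasurable_condExp hψb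
      (indSM (hTmeas.inter hBmeas)).aestronglyMeasurable
      (Filter.Eventually.of_forall (aux_ind_bound _))
    have hψγ1B_int : Integrable (((μ⟦S'|G⟧) * (μ⟦T|G⟧)) * Set.indicator B fun _ => (1:ℝ)) μ :=
      aux_intb (((stronglyMeasurable_condExp.mul stronglyMeasurable_condExp).mono
        hG).aestronglyMeasurable.mul (indSM hBmeas).aestronglyMeasurable)
        (aux_mulb hψγb (Filter.Eventually.of_forall (aux_ind_bound _)))
    have pullG2 := aux_pullout (mΩ := mΩ) hG
      (stronglyMeasurable_condExp.mul stronglyMeasurable_condExp) hψγb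
      (indSM hBmeas).aestronglyMeasurable (Filter.Eventually.of_forall (aux_ind_bound _))
    calc ∫ x in u ∩ B, ((μ⟦S'|G⟧) * (μ⟦T|G⟧)) x ∂μ
        = ∫ x in u, B.indicator ((μ⟦S'|G⟧) * (μ⟦T|G⟧)) x ∂μ :=
          (setIntegral_indicator (μ := μ) hBmeas).symm
      _ = ∫ x in u, (((μ⟦S'|G⟧) * (μ⟦T|G⟧)) * Set.indicator B fun _ => (1:ℝ)) x ∂μ := by
          refine setIntegral_congr_fun (μ := μ) hu fun ω _ => ?_
          by_cases h : ω ∈ B <;> simp [Set.indicator_apply, h]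
      _ = ∫ x in u, (μ[((μ⟦S'|G⟧) * (μ⟦T|G⟧)) * Set.indicator B fun _ => (1:ℝ)|G]) x ∂μ :=
          (setIntegral_condExp hG hψγ1B_int huG).symm
      _ = ∫ x in u, (((μ⟦S'|G⟧) * (μ⟦T|G⟧)) * (μ⟦B|G⟧)) x ∂μ :=
          setIntegral_congr_ae (μ := μ) hu (pullG2.mono fun ω h _ => h)
      _ = ∫ x in u, ((μ⟦S'|G⟧) * ((μ⟦T|G⟧) * (μ⟦B|G⟧))) x ∂μ := by
          refine setIntegral_congr_fun (μ := μ) hu fun ω _ => ?_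
          simp [mul_assoc]
      _ = ∫ x in u, ((μ⟦S'|G⟧) * (μ⟦T ∩ B|G⟧)) x ∂μ := by
          refine setIntegral_congr_ae (μ := μ) hu ?_
          filter_upwards [hNC₃'] with ω h _
          simp only [Pi.mul_apply]
          rw [h, Pi.mul_apply]
      _ = ∫ x in u, (μ[(μ⟦S'|G⟧) * Set.indicator (T ∩ B) fun _ => (1:ℝ)|G]) x ∂μ :=
          (setIntegral_congr_ae (μ := μ) hu (pullG.mono fun ω h _ => h)).symm
      _ = ∫ x in u, ((μ⟦S'|G⟧) * Set.indicator (T ∩ B) fun _ => (1:ℝ)) x ∂μ :=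
          setIntegral_condExp hG hψ1TB_int huG
      _ = ∫ x in u, B.indicator ((μ⟦S'|G⟧) * Set.indicator T fun _ => (1:ℝ)) x ∂μ := by
          refine setIntegral_congr_fun (μ := μ) hu fun ω _ => ?_
          by_cases h1 : ω ∈ B <;> by_cases h2 : ω ∈ T <;>
            simp [Set.indicator_apply, h1, h2]
      _ = ∫ x in u ∩ B, ((μ⟦S'|G⟧) * Set.indicator T fun _ => (1:ℝ)) x ∂μ :=
          setIntegral_indicator (μ := μ) hBmeas
      _ = ∫ x in u ∩ B, (μ[(μ⟦S'|G⟧) * Set.indicator T fun _ => (1:ℝ)|M]) x ∂μ :=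
          (setIntegral_condExp hM hψ1T_int huB_M).symm
      _ = ∫ x in u ∩ B, ((μ⟦S'|G⟧) * (μ[Set.indicator T fun ω => (1:ℝ)|M])) x ∂μ :=
          setIntegral_congr_ae (μ := μ) huB (pullM.mono fun ω h _ => h)
      _ = ∫ x in u ∩ B,
            ((μ[Set.indicator S' fun ω => (1:ℝ)|M]) * (μ[Set.indicator T fun ω => (1:ℝ)|M])) x ∂μ :=
          setIntegral_congr_ae (μ := μ) huB
            ((F4.mul (Filter.EventuallyEq.refl _ _)).mono fun ω h _ => h)
      _ = ∫ x in u ∩ B, (μ⟦S' ∩ T|M⟧) x ∂μ :=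
          (setIntegral_congr_ae (μ := μ) huB (hNC₂'.mono fun ω h _ => h)).symm
      _ = ∫ x in u ∩ B, Set.indicator (S' ∩ T) (fun _ => (1:ℝ)) x ∂μ :=
          setIntegral_condExp hM hS'Tint huB_M
  -- conclusion
  refine C3.symm.trans ?_
  filter_upwards [C1, C2] with ω h1 h2
  simp only [Pi.mul_apply]
  rw [h1, h2]
end

section
/- Let (Ω, 𝓕, ℙ) be a standard Borel probability space, let X : Ω → ℝ be integrable, let A, Z : Ω → {0,1} be measurable with ℙ(Z = 1, A = 0) > 0 and ℙ(Z = 0, A = 0) > 0, and let Y, Y₀ : Ω → ℝ be integrable with Y = Y₀ almost surely on {A = 0} (consistency). Assume: (i) Y₀ is conditionally independent of A given σ(X); (ii) E[Y₀ | σ(X)] = α + β·X almost surely for real constants α, β; and (iii) under the conditional measure ℙ[· | A = 0], Y₀ is conditionally independent of Z given σ(X). Then E[Y | Z = 1, A = 0] − E[Y | Z = 0, A = 0] = β·(E[X | Z = 1, A = 0] − E[X | Z = 0, A = 0]). (This is the paper's Supplemental Appendix S1.4 expression for the confounding bias B₂ of the unadjusted contrast in the observed outcome across negative control exposure groups within the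 unexposed: it equals the slope β times the covariate mean difference D₂ across negative control exposure groups among the unexposed.) -/
open MeasureTheory ProbabilityTheory

open MeasurableSpace
open scoped ENNReal

section lemmas
variable {Ω : Type*} {mΩ : MeasurableSpace Ω} [StandardBorelSpace Ω] {μ : Measure Ω}
  [IsFiniteMeasure μ] {m' : MeasurableSpace Ω}

/-- Under conditional independence of `f` and `g` given `m'`, the conditional probability of
`g ⁻¹' t` given `m' ⊔ σ(f)` equals that given `m'`. -/
lemma condexp_indicator_sup {f g : Ω → ℝ} (hf : Measurable[mΩ] f) (hg : Measurable[mΩ] g)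
    (hm' : m' ≤ mΩ) (hfg : CondIndepFun m' hm' f g μ) {t : Set ℝ} (ht : MeasurableSet t) :
    μ[(g ⁻¹' t).indicator (fun _ => (1:ℝ)) | m' ⊔ MeasurableSpace.comap f inferInstance]
      =ᵐ[μ] μ[(g ⁻¹' t).indicator (fun _ => (1:ℝ)) | m'] := by
  set m₁ : MeasurableSpace Ω := MeasurableSpace.comap f inferInstance with hm₁def
  set mm : MeasurableSpace Ω := m' ⊔ m₁ with hmmdef
  have hmm : mm ≤ mΩ := sup_le hm' hf.comap_le
  letI : MeasurableSpace Ω := mΩ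
  set T : Set Ω := g ⁻¹' t with hTdef
  have hTmeas : MeasurableSet[mΩ] T := hg ht
  have hTint : Integrable (T.indicator (fun _ => (1:ℝ))) μ :=
    (integrable_const (1:ℝ)).indicator (μ := μ) hTmeas
  set h : Ω → ℝ := μ[T.indicator (fun _ => (1:ℝ)) | m'] with hhdef
  have hhint : Integrable h μ := integrable_condExp
  haveI : SigmaFinite (μ.trim hmm) := IsFiniteMeasure.toSigmaFinite _
  -- the generating π-system
  set C : Set (Set Ω) := {s | ∃ s₁, MeasurableSet[m'] s₁ ∧ ∃ u, MeasurableSet u ∧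
    s = s₁ ∩ f ⁻¹' u} with hCdef
  have hgen : mm = MeasurableSpace.generateFrom C := by
    refine le_antisymm (sup_le ?_ ?_) (MeasurableSpace.generateFrom_le ?_)
    · intro s hs
      exact measurableSet_generateFrom ⟨s, hs, Set.univ, MeasurableSet.univ, by simp⟩
    · rintro s ⟨u, hu, rfl⟩
      exact measurableSet_generateFrom ⟨Set.univ, MeasurableSet.univ, u, hu, by simp⟩
    · rintro s ⟨s₁, hs₁, u, hu, rfl⟩
      exact MeasurableSet.inter ((le_sup_left : m' ≤ mm) _ hs₁)
        ((le_sup_right : m₁ ≤ mm) _ ⟨u, hu, rfl⟩)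
  have hpi : IsPiSystem C := by
    rintro s ⟨s₁, hs₁, u, hu, rfl⟩ s' ⟨s₂, hs₂, v, hv, rfl⟩ -
    refine ⟨s₁ ∩ s₂, hs₁.inter hs₂, u ∩ v, hu.inter hv, ?_⟩
    ext ω; simp only [Set.mem_inter_iff, Set.mem_preimage]; tauto
  -- key integral identity over the π-system, extended to `mm`
  have hkey : ∀ s : Set Ω, MeasurableSet[mm] s →
      ∫ ω in s, h ω ∂μ = ∫ ω in s, T.indicator (fun _ => (1:ℝ)) ω ∂μ := by
    refine @MeasurableSpace.induction_on_inter Ω mm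
      (fun s _ => ∫ ω in s, h ω ∂μ = ∫ ω in s, T.indicator (fun _ => (1:ℝ)) ω ∂μ) C
      hgen hpi (by simp) ?_ ?_ ?_
    · -- basic
      rintro s ⟨s₁, hs₁, u, hu, rfl⟩
      have hu' : MeasurableSet[mΩ] (f ⁻¹' u) := hf hu
      set e : Ω → ℝ := (f ⁻¹' u).indicator (fun _ => (1:ℝ)) with hedef
      have hindu : Integrable e μ := (integrable_const (1:ℝ)).indicator (μ := μ) hu'
      have hbd : ∀ᵐ ω ∂μ, ‖e ω‖ ≤ 1 := by
        refine Filter.Eventually.of_forall fun ω => ?_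
        by_cases hω : ω ∈ f ⁻¹' u <;> simp [hedef, hω]
      have hint : Integrable (h * e) μ :=
        ((hhint.bdd_mul hindu.1 hbd).congr
          (Filter.Eventually.of_forall fun ω => mul_comm _ _) : _)
      have hintT : Integrable ((f ⁻¹' u ∩ T).indicator (fun _ => (1:ℝ))) μ :=
        (integrable_const (1:ℝ)).indicator (μ := μ) (hu'.inter hTmeas)
      have hmul := (condIndepFun_iff_condExp_inter_preimage_eq_mul hf hg).mp hfg u t hu ht
      have h2 : μ[h * e|m'] =ᵐ[μ] h * μ[e|m'] :=
        condExp_mul_of_stronglyMeasurable_left stronglyMeasurable_condExp hint hindu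
      have hkey : μ[h * e|m'] =ᵐ[μ] μ[(f ⁻¹' u ∩ T).indicator (fun _ => (1:ℝ))|m'] := by
        filter_upwards [h2, hmul] with ω ha hb
        rw [ha]
        simp only [Pi.mul_apply]
        rw [hb, mul_comm]
      calc ∫ ω in s₁ ∩ f ⁻¹' u, h ω ∂μ
          = ∫ ω in s₁, (f ⁻¹' u).indicator h ω ∂μ := (setIntegral_indicator hu').symm
        _ = ∫ ω in s₁, (h * e) ω ∂μ := by
            refine integral_congr_ae (Filter.Eventually.of_forall fun ω => ?_)
            by_cases hω : ω ∈ f ⁻¹' u <;>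
              simp [hedef, hω, Set.indicator_of_mem, Set.indicator_of_notMem]
        _ = ∫ ω in s₁, (μ[h * e|m']) ω ∂μ := (setIntegral_condExp hm' hint hs₁).symm
        _ = ∫ ω in s₁, (μ[(f ⁻¹' u ∩ T).indicator (fun _ => (1:ℝ))|m']) ω ∂μ :=
            integral_congr_ae (ae_restrict_of_ae hkey)
        _ = ∫ ω in s₁, (f ⁻¹' u ∩ T).indicator (fun _ => (1:ℝ)) ω ∂μ :=
            setIntegral_condExp hm' hintT hs₁
        _ = ∫ ω in s₁ ∩ (f ⁻¹' u ∩ T), (1:ℝ) ∂μ := setIntegral_indicator (hu'.inter hTmeas)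
        _ = ∫ ω in s₁ ∩ f ⁻¹' u, T.indicator (fun _ => (1:ℝ)) ω ∂μ := by
            rw [setIntegral_indicator hTmeas, Set.inter_assoc]
    · -- compl
      intro s hs hseq
      have hs' : MeasurableSet[mΩ] s := hmm _ hs
      have h1 := integral_add_compl (μ := μ) hs' hhint
      have h2 := integral_add_compl (μ := μ) hs' hTint
      have h3 : ∫ ω, h ω ∂μ = ∫ ω, T.indicator (fun _ => (1:ℝ)) ω ∂μ :=
        integral_condExp hm'
      linarith
    · -- iUnion
      intro g' hdisj hmeas hfi
      have hmeas' : ∀ i, MeasurableSet[mΩ] (g' i) := fun i => hmm _ (hmeas i)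
      rw [integral_iUnion (μ := μ) hmeas' hdisj hhint.integrableOn,
        integral_iUnion (μ := μ) hmeas' hdisj hTint.integrableOn]
      exact tsum_congr hfi
  exact (ae_eq_condExp_of_forall_setIntegral_eq hmm hTint
    (fun s _ _ => hhint.integrableOn) (fun s hs hμs => hkey s hs)
    ((stronglyMeasurable_condExp.aestronglyMeasurable (μ := μ)).mono (le_sup_left : m' ≤ mm))).symm


/-- Product rule: if `f ⟂⟂ g | m'` and `f` is integrable, then
`μ[f · 1_{g⁻¹t} | m'] = μ[f|m'] · μ[1_{g⁻¹t}|m']`. -/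
lemma condexp_mul_indicator_of_condIndepFun {f g : Ω → ℝ}
    (hf : Measurable[mΩ] f) (hg : Measurable[mΩ] g)
    (hm' : m' ≤ mΩ) (hfg : CondIndepFun m' hm' f g μ) (hfint : Integrable f μ)
    {t : Set ℝ} (ht : MeasurableSet t) :
    μ[f * (g ⁻¹' t).indicator (fun _ => (1:ℝ)) | m']
      =ᵐ[μ] μ[f | m'] * μ[(g ⁻¹' t).indicator (fun _ => (1:ℝ)) | m'] := by
  set m₁ : MeasurableSpace Ω := MeasurableSpace.comap f inferInstance with hm₁def
  set mm : MeasurableSpace Ω := m' ⊔ m₁ with hmmdef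
  have hmm : mm ≤ mΩ := sup_le hm' hf.comap_le
  letI : MeasurableSpace Ω := mΩ
  set T : Set Ω := g ⁻¹' t with hTdef
  have hTmeas : MeasurableSet[mΩ] T := hg ht
  set e : Ω → ℝ := T.indicator (fun _ => (1:ℝ)) with hedef
  have hTint : Integrable e μ := (integrable_const (1:ℝ)).indicator (μ := μ) hTmeas
  have hbd : ∀ᵐ ω ∂μ, ‖e ω‖ ≤ 1 := by
    refine Filter.Eventually.of_forall fun ω => ?_
    by_cases hω : ω ∈ T <;> simp [hedef, hω]
  have hint : Integrable (f * e) μ :=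
    ((hfint.bdd_mul hTint.1 hbd).congr
      (Filter.Eventually.of_forall fun ω => mul_comm _ _) : _)
  have hfm : StronglyMeasurable[mm] f := by
    have : Measurable[m₁] f := fun s hs => ⟨s, hs, rfl⟩
    exact (this.mono (le_sup_right : m₁ ≤ mm) le_rfl).stronglyMeasurable
  -- conditional probability of T given m' as a bounded function
  have hh01 : ∀ᵐ ω ∂μ, ‖(μ[e|m']) ω‖ ≤ 1 := by
    have h0 : (0:Ω → ℝ) ≤ᵐ[μ] μ[e|m'] := condExp_nonneg (by
      refine Filter.Eventually.of_forall fun ω => ?_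
      by_cases hω : ω ∈ T <;> simp [hedef, hω])
    have h1 : μ[e|m'] ≤ᵐ[μ] fun _ => (1:ℝ) := by
      refine (condExp_mono hTint (integrable_const (1:ℝ)) ?_).trans ?_
      · refine Filter.Eventually.of_forall fun ω => ?_
        by_cases hω : ω ∈ T <;> simp [hedef, hω]
      · exact Filter.EventuallyEq.le (Filter.EventuallyEq.of_eq (condExp_const (μ := μ) hm' (1:ℝ)))
    filter_upwards [h0, h1] with ω h0ω h1ω
    simp only [Pi.zero_apply] at h0ω
    rw [Real.norm_eq_abs, abs_le]
    exact ⟨by linarith, h1ω⟩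
  have hint2 : Integrable (μ[e|m'] * f) μ :=
    hfint.bdd_mul (stronglyMeasurable_condExp.mono hm').aestronglyMeasurable hh01
  -- tower + pull-out
  have step1 : μ[f * e|m'] =ᵐ[μ] μ[μ[f * e|mm]|m'] :=
    (condExp_condExp_of_le (le_sup_left : m' ≤ mm) hmm).symm
  have step2 : μ[f * e|mm] =ᵐ[μ] f * μ[e|mm] :=
    condExp_mul_of_stronglyMeasurable_left hfm hint hTint
  have step3 : μ[e|mm] =ᵐ[μ] μ[e|m'] := condexp_indicator_sup hf hg hm' hfg ht
  have step4 : μ[f * e|mm] =ᵐ[μ] μ[e|m'] * f := by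
    refine (step2.trans ?_)
    filter_upwards [step3] with ω hω
    simp only [Pi.mul_apply]
    rw [hω, mul_comm]
  have step5 : μ[μ[f * e|mm]|m'] =ᵐ[μ] μ[μ[e|m'] * f|m'] := condExp_congr_ae step4
  have step6 : μ[μ[e|m'] * f|m'] =ᵐ[μ] μ[e|m'] * μ[f|m'] :=
    condExp_mul_of_stronglyMeasurable_left stronglyMeasurable_condExp hint2 hfint
  refine ((step1.trans step5).trans step6).trans ?_
  exact Filter.Eventually.of_forall fun ω => mul_comm _ _

/-- If moreover `μ[f|m'] = w` with `w` an `m'`-measurable integrable function, then the set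
integrals of `f · 1_{g⁻¹t}` and `w · 1_{g⁻¹t}` over `m'`-measurable sets agree. -/
lemma setIntegral_mul_indicator_eq_of_condexp_eq {f g w : Ω → ℝ}
    (hf : Measurable[mΩ] f) (hg : Measurable[mΩ] g)
    (hm' : m' ≤ mΩ) (hfg : CondIndepFun m' hm' f g μ) (hfint : Integrable f μ)
    (hw : StronglyMeasurable[m'] w) (hwint : Integrable w μ)
    (hcond : μ[f|m'] =ᵐ[μ] w) {t : Set ℝ} (ht : MeasurableSet t)
    {s : Set Ω} (hs : MeasurableSet[m'] s) :
    ∫ ω in s, f ω * (g ⁻¹' t).indicator (fun _ => (1:ℝ)) ω ∂μ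
      = ∫ ω in s, w ω * (g ⁻¹' t).indicator (fun _ => (1:ℝ)) ω ∂μ := by
  letI : MeasurableSpace Ω := mΩ
  set T : Set Ω := g ⁻¹' t with hTdef
  have hTmeas : MeasurableSet[mΩ] T := hg ht
  set e : Ω → ℝ := T.indicator (fun _ => (1:ℝ)) with hedef
  have hTint : Integrable e μ := (integrable_const (1:ℝ)).indicator (μ := μ) hTmeas
  have hbd : ∀ᵐ ω ∂μ, ‖e ω‖ ≤ 1 := by
    refine Filter.Eventually.of_forall fun ω => ?_
    by_cases hω : ω ∈ T <;> simp [hedef, hω]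
  have hint : Integrable (f * e) μ :=
    ((hfint.bdd_mul hTint.1 hbd).congr
      (Filter.Eventually.of_forall fun ω => mul_comm _ _) : _)
  have hintw : Integrable (w * e) μ :=
    ((hwint.bdd_mul hTint.1 hbd).congr
      (Filter.Eventually.of_forall fun ω => mul_comm _ _) : _)
  have hB := condexp_mul_indicator_of_condIndepFun hf hg hm' hfg hfint ht
  have hpull : μ[w * e|m'] =ᵐ[μ] w * μ[e|m'] :=
    condExp_mul_of_stronglyMeasurable_left hw hintw hTint
  have hkey : μ[f * e|m'] =ᵐ[μ] μ[w * e|m'] := by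
    refine hB.trans (.trans ?_ hpull.symm)
    filter_upwards [hcond] with ω hω
    simp only [Pi.mul_apply]
    rw [hω]
  calc ∫ ω in s, (f * e) ω ∂μ
      = ∫ ω in s, (μ[f * e|m']) ω ∂μ := (setIntegral_condExp hm' hint hs).symm
    _ = ∫ ω in s, (μ[w * e|m']) ω ∂μ := integral_congr_ae (ae_restrict_of_ae hkey)
    _ = ∫ ω in s, (w * e) ω ∂μ := setIntegral_condExp hm' hintw hs

end lemmas

/-- The confounding bias of the unadjusted contrast in the observed outcome across negative
control exposure groups within the unexposed equals the slope `β` times the covariate mean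
difference across negative control exposure groups among the unexposed:
`E[Y|Z=1,A=0] − E[Y|Z=0,A=0] = β·(E[X|Z=1,A=0] − E[X|Z=0,A=0])`,
where `E[W|B] = E[W·1_B]/ℙ(B)`. -/
theorem bias_formula_negative_control {Ω : Type*} [mΩ : MeasurableSpace Ω]
    [StandardBorelSpace Ω] [Nonempty Ω]
    (μ : Measure Ω) [IsProbabilityMeasure μ]
    (X : Ω → ℝ) (A Z : Ω → ℝ) (Y Y₀ : Ω → ℝ)
    (hX : Measurable X) (hA : Measurable A) (hZ : Measurable Z)
    (hY : Measurable Y) (hY₀ : Measurable Y₀)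
    (hXint : Integrable X μ) (hYint : Integrable Y μ) (hY₀int : Integrable Y₀ μ)
    (hAbin : ∀ ω, A ω = 0 ∨ A ω = 1) (hZbin : ∀ ω, Z ω = 0 ∨ Z ω = 1)
    (hZ1A0 : 0 < μ {ω | Z ω = 1 ∧ A ω = 0}) (hZ0A0 : 0 < μ {ω | Z ω = 0 ∧ A ω = 0})
    (hcons : ∀ᵐ ω ∂μ, A ω = 0 → Y ω = Y₀ ω)
    (hPE : CondIndepFun (MeasurableSpace.comap X inferInstance) hX.comap_le Y₀ A μ)
    (α β : ℝ)
    (hlin : μ[Y₀ | MeasurableSpace.comap X inferInstance] =ᵐ[μ] fun ω => α + β * X ω)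
    (hNC : CondIndepFun (MeasurableSpace.comap X inferInstance) hX.comap_le Y₀ Z
      (μ[|{ω | A ω = 0}])) :
    (∫ ω in {ω | Z ω = 1 ∧ A ω = 0}, Y ω ∂μ) / (μ {ω | Z ω = 1 ∧ A ω = 0}).toReal
      - (∫ ω in {ω | Z ω = 0 ∧ A ω = 0}, Y ω ∂μ) / (μ {ω | Z ω = 0 ∧ A ω = 0}).toReal
    = β * ((∫ ω in {ω | Z ω = 1 ∧ A ω = 0}, X ω ∂μ) / (μ {ω | Z ω = 1 ∧ A ω = 0}).toReal
      - (∫ ω in {ω | Z ω = 0 ∧ A ω = 0}, X ω ∂μ) / (μ {ω | Z ω = 0 ∧ A ω = 0}).toReal) := by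
  set m : MeasurableSpace Ω := MeasurableSpace.comap X inferInstance with hmdef
  letI : MeasurableSpace Ω := mΩ
  have hm : m ≤ mΩ := hX.comap_le
  set A0 : Set Ω := {ω | A ω = 0} with hA0def
  have hA0preim : A0 = A ⁻¹' ({0} : Set ℝ) := rfl
  have hA0meas : MeasurableSet[mΩ] A0 := hA (measurableSet_singleton 0)
  set c : ℝ≥0∞ := μ A0 with hcdef
  have hT1sub : {ω | Z ω = 1 ∧ A ω = 0} ⊆ A0 := fun ω hω => hω.2
  have hc0 : c ≠ 0 := (lt_of_lt_of_le hZ1A0 (measure_mono hT1sub)).ne'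
  have hcfin : c ≠ ∞ := measure_ne_top μ A0
  have hcR : c.toReal ≠ 0 := ENNReal.toReal_ne_zero.mpr ⟨hc0, hcfin⟩
  set ν : Measure Ω := μ[|A0] with hνdef
  haveI : IsProbabilityMeasure ν := cond_isProbabilityMeasure hc0
  -- transfer of integrability to ν
  have hint_nu : ∀ {φ : Ω → ℝ}, Integrable φ μ → Integrable φ ν := by
    intro φ h
    rw [hνdef, ProbabilityTheory.cond]
    exact (h.restrict (s := A0)).smul_measure (ENNReal.inv_ne_top.mpr hc0)
  have hY₀ν : Integrable Y₀ ν := hint_nu hY₀int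
  have hXν : Integrable X ν := hint_nu hXint
  -- the linear function
  set w : Ω → ℝ := fun ω => α + β * X ω with hwdef
  have hXm : Measurable[m] X := fun s hs => ⟨s, hs, rfl⟩
  have hw_meas : StronglyMeasurable[m] w := ((hXm.const_mul β).const_add α).stronglyMeasurable
  have hwint : Integrable w μ := by
    rw [hwdef]
    exact (integrable_const α).add (hXint.const_mul β)
  have hwν : Integrable w ν := hint_nu hwint
  -- set-integral translation between ν and μ
  have htrans : ∀ (φ : Ω → ℝ) (S : Set Ω), MeasurableSet[mΩ] S →
      ∫ ω in S, φ ω ∂ν = (c.toReal)⁻¹ * ∫ ω in S ∩ A0, φ ω ∂μ := by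
    intro φ S hS
    rw [hνdef, ProbabilityTheory.cond, Measure.restrict_smul, integral_smul_measure,
      Measure.restrict_restrict hS, ENNReal.toReal_inv, smul_eq_mul]
  -- conditional expectation of Y₀ given m under ν is the linear function
  have hstep2 : ν[Y₀|m] =ᵐ[ν] w := by
    have hinds : ∀ (φ : Ω → ℝ) (s : Set Ω), MeasurableSet[mΩ] s →
        ∫ ω in s ∩ A0, φ ω ∂μ
          = ∫ ω in s, φ ω * (A ⁻¹' ({0} : Set ℝ)).indicator (fun _ => (1:ℝ)) ω ∂μ := by
      intro φ s hs
      rw [← hA0preim, ← setIntegral_indicator hA0meas]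
      refine integral_congr_ae (Filter.Eventually.of_forall fun ω => ?_)
      by_cases hω : ω ∈ A0 <;> simp [hω]
    refine (ae_eq_condExp_of_forall_setIntegral_eq hm hY₀ν
      (fun s _ _ => hwν.integrableOn) (fun s hs _ => ?_)
      (hw_meas.aestronglyMeasurable)).symm
    have hs' : MeasurableSet[mΩ] s := hm s hs
    rw [htrans Y₀ s hs', htrans w s hs']
    congr 1
    rw [hinds Y₀ s hs', hinds w s hs']
    exact (setIntegral_mul_indicator_eq_of_condexp_eq hY₀ hA hm hPE hY₀int hw_meas hwint hlin
      (measurableSet_singleton 0) hs).symm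
  -- the key ν identity
  have hkeyν : ∀ z : ℝ, ∫ ω in Z ⁻¹' {z}, Y₀ ω ∂ν = ∫ ω in Z ⁻¹' {z}, w ω ∂ν := by
    intro z
    have hZt : MeasurableSet ({z} : Set ℝ) := measurableSet_singleton z
    have hconv : ∀ φ : Ω → ℝ,
        ∫ ω, φ ω * (Z ⁻¹' {z}).indicator (fun _ => (1:ℝ)) ω ∂ν
          = ∫ ω in Z ⁻¹' {z}, φ ω ∂ν := by
      intro φ
      rw [← integral_indicator (hZ hZt)]
      refine integral_congr_ae (Filter.Eventually.of_forall fun ω => ?_)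
      by_cases hω : ω ∈ Z ⁻¹' {z} <;> simp [hω]
    have h := setIntegral_mul_indicator_eq_of_condexp_eq (μ := ν) hY₀ hZ hm hNC hY₀ν hw_meas
      hwν hstep2 hZt MeasurableSet.univ
    rw [Measure.restrict_univ] at h
    rw [← hconv Y₀, ← hconv w]
    exact h
  -- key identity for each exposure group, back under μ
  have hkeyz : ∀ z : ℝ, ∫ ω in {ω | Z ω = z ∧ A ω = 0}, Y ω ∂μ
      = α * (μ {ω | Z ω = z ∧ A ω = 0}).toReal + β * ∫ ω in {ω | Z ω = z ∧ A ω = 0}, X ω ∂μ := by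
    intro z
    have hZt : MeasurableSet ({z} : Set ℝ) := measurableSet_singleton z
    have hTzeq : {ω | Z ω = z ∧ A ω = 0} = Z ⁻¹' {z} ∩ A0 := rfl
    have hTzmeas : MeasurableSet[mΩ] {ω | Z ω = z ∧ A ω = 0} := by
      rw [hTzeq]; exact (hZ hZt).inter hA0meas
    have h1 : ∫ ω in {ω | Z ω = z ∧ A ω = 0}, Y ω ∂μ
        = ∫ ω in {ω | Z ω = z ∧ A ω = 0}, Y₀ ω ∂μ := by
      refine setIntegral_congr_ae hTzmeas ?_
      filter_upwards [hcons] with ω hω hmem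
      exact hω hmem.2
    have hνS : ν (Z ⁻¹' {z}) = c⁻¹ * μ {ω | Z ω = z ∧ A ω = 0} := by
      rw [hνdef, cond_apply hA0meas, hTzeq, Set.inter_comm]
    have hR : ∫ ω in Z ⁻¹' {z}, w ω ∂ν
        = α * (ν (Z ⁻¹' {z})).toReal + β * ∫ ω in Z ⁻¹' {z}, X ω ∂ν := by
      rw [hwdef]
      rw [integral_add (integrable_const α).integrableOn (hXν.const_mul β).integrableOn,
        setIntegral_const, integral_const_mul, smul_eq_mul, measureReal_def]
      ring
    have hL : ∫ ω in Z ⁻¹' {z}, Y₀ ω ∂ν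
        = (c.toReal)⁻¹ * ∫ ω in {ω | Z ω = z ∧ A ω = 0}, Y₀ ω ∂μ := by
      rw [htrans Y₀ _ (hZ hZt), hTzeq]
    have hXL : ∫ ω in Z ⁻¹' {z}, X ω ∂ν
        = (c.toReal)⁻¹ * ∫ ω in {ω | Z ω = z ∧ A ω = 0}, X ω ∂μ := by
      rw [htrans X _ (hZ hZt), hTzeq]
    have hνSR : (ν (Z ⁻¹' {z})).toReal
        = (c.toReal)⁻¹ * (μ {ω | Z ω = z ∧ A ω = 0}).toReal := by
      rw [hνS, ENNReal.toReal_mul, ENNReal.toReal_inv]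
    have hmain := hkeyν z
    rw [hL, hR, hXL, hνSR] at hmain
    rw [h1]
    have := mul_left_cancel₀ (inv_ne_zero hcR)
      (hmain.trans (by ring : α * ((c.toReal)⁻¹ * (μ {ω | Z ω = z ∧ A ω = 0}).toReal)
        + β * ((c.toReal)⁻¹ * ∫ ω in {ω | Z ω = z ∧ A ω = 0}, X ω ∂μ)
        = (c.toReal)⁻¹ * (α * (μ {ω | Z ω = z ∧ A ω = 0}).toReal
          + β * ∫ ω in {ω | Z ω = z ∧ A ω = 0}, X ω ∂μ)))
    exact this
  have p1 : (μ {ω | Z ω = 1 ∧ A ω = 0}).toReal ≠ 0 :=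
    ENNReal.toReal_ne_zero.mpr ⟨hZ1A0.ne', measure_ne_top _ _⟩
  have p0 : (μ {ω | Z ω = 0 ∧ A ω = 0}).toReal ≠ 0 :=
    ENNReal.toReal_ne_zero.mpr ⟨hZ0A0.ne', measure_ne_top _ _⟩
  rw [hkeyz 1, hkeyz 0]
  field_simp
  ring
end
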